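/- Let S be a control semigroup and let X and Y be metric spaces. Equip X × Y with the max metric d((x,y),(x',y')) = max(d_X(x,x'), d_Y(y,y')). Then asdim_S (X × Y) ≤ asdim_S X + asdim_S Y. -/

import Mathlib

open Filter Set Metric Topology
open scoped NNReal ENNReal


/-- A large-scale (asymptotic) dim-control function: continuous, increasing,
eventually at least the identity, tending to infinity. -/
def IsLSControl (f : ℝ≥0 → ℝ≥0) : Prop :=
  Continuous f ∧ Monotone f ∧ (∀ᶠ x in atTop, x ≤ f x) ∧ Tendsto f atTop atTop

/-- Asymptotically linear: coincides with a linear function on a neighborhood of infinity. -/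
def IsAsympLinear (f : ℝ≥0 → ℝ≥0) : Prop :=
  ∃ a b : ℝ≥0, ∀ᶠ x in atTop, f x = a * x + b

/-- A (large-scale) control semigroup. -/
def IsControlSemigroup (S : Set (ℝ≥0 → ℝ≥0)) : Prop :=
  (∀ f ∈ S, IsLSControl f) ∧
  (∀ f, IsLSControl f → IsAsympLinear f → f ∈ S) ∧
  (∀ f ∈ S, ∀ g ∈ S, f ∘ g ∈ S)

/-- A family of subsets is `s`-disjoint if distinct members are at distance `> s`. -/
def SDisjoint {X : Type*} [MetricSpace X] (s : ℝ≥0) (𝒰 : Set (Set X)) : Prop :=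
  ∀ U ∈ 𝒰, ∀ V ∈ 𝒰, U ≠ V → ∀ x ∈ U, ∀ y ∈ V, (s : ℝ) < dist x y

/-- A family of subsets is `D`-bounded if each member has diameter at most `D`. -/
def BoundedBy {X : Type*} [MetricSpace X] (D : ℝ≥0) (𝒰 : Set (Set X)) : Prop :=
  ∀ U ∈ 𝒰, EMetric.diam U ≤ (D : ℝ≥0∞)

/-- `asdim_S X ≤ n`. -/
def ASDimLE (S : Set (ℝ≥0 → ℝ≥0)) (X : Type*) [MetricSpace X] (n : ℕ) : Prop :=
  ∃ f ∈ S, ∃ s₀ : ℝ≥0, ∀ s : ℝ≥0, s₀ ≤ s →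
    ∃ 𝒰 : Fin (n + 1) → Set (Set X),
      (⋃ i, ⋃₀ 𝒰 i) = univ ∧ ∀ i, SDisjoint s (𝒰 i) ∧ BoundedBy (f s) (𝒰 i)

/-- The `S`-controlled asymptotic dimension, as an element of `ℕ∞`. -/
noncomputable def ASDim (S : Set (ℝ≥0 → ℝ≥0)) (X : Type*) [MetricSpace X] : ℕ∞ :=
  sInf {k : ℕ∞ | ∃ n : ℕ, k = n ∧ ASDimLE S X n}

/-- `S₁ ⪯ S₂` : `S₂` is finer than `S₁`. -/
def Preceq (S₁ S₂ : Set (ℝ≥0 → ℝ≥0)) : Prop :=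
  ∀ f ∈ S₂, ∃ g ∈ S₁, ∀ᶠ x in atTop, f x ≤ g x


noncomputable section AsdimProdAux
open Classical

/-- canonical choice of an element of a finite set of pairs -/
def pickPair (F : Finset (ℕ × ℕ)) : ℕ × ℕ :=
  if h : F.Nonempty then h.choose else (0, 0)

lemma pickPair_mem {F : Finset (ℕ × ℕ)} (h : F.Nonempty) : pickPair F ∈ F := by
  rw [pickPair, dif_pos h]; exact h.choose_spec

variable {X : Type*} [MetricSpace X]

/-- bump function attached to a family of sets -/
def bump (𝒰 : Set (Set X)) (r : ℝ) (x : X) : ℝ :=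
  if (⋃₀ 𝒰).Nonempty then max 0 (r - Metric.infDist x (⋃₀ 𝒰)) else 0

lemma bump_nonneg (𝒰 : Set (Set X)) (r : ℝ) (x : X) : 0 ≤ bump 𝒰 r x := by
  rw [bump]; split
  · exact le_max_left _ _
  · exact le_rfl

lemma bump_le (𝒰 : Set (Set X)) {r : ℝ} (hr : 0 ≤ r) (x : X) : bump 𝒰 r x ≤ r := by
  rw [bump]; split
  · exact max_le hr (by linarith [Metric.infDist_nonneg (s := ⋃₀ 𝒰) (x := x)])
  · exact hr

lemma bump_lip (𝒰 : Set (Set X)) (r : ℝ) (x x' : X) :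
    bump 𝒰 r x ≤ bump 𝒰 r x' + dist x x' := by
  rw [bump, bump]; split
  · have h1 : Metric.infDist x' (⋃₀ 𝒰) ≤ Metric.infDist x (⋃₀ 𝒰) + dist x x' := by
      simpa [dist_comm] using Metric.infDist_le_infDist_add_dist (s := ⋃₀ 𝒰) (x := x') (y := x)
    have hd : (0:ℝ) ≤ dist x x' := dist_nonneg
    rcases le_total 0 (r - Metric.infDist x (⋃₀ 𝒰)) with h | h
    · rw [max_eq_right h]
      calc r - Metric.infDist x (⋃₀ 𝒰)
          ≤ (r - Metric.infDist x' (⋃₀ 𝒰)) + dist x x' := by linarith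
        _ ≤ max 0 (r - Metric.infDist x' (⋃₀ 𝒰)) + dist x x' := by
            gcongr; exact le_max_right _ _
    · rw [max_eq_left h]
      have := le_max_left (0:ℝ) (r - Metric.infDist x' (⋃₀ 𝒰))
      linarith
  · have hd : (0:ℝ) ≤ dist x x' := dist_nonneg
    linarith

lemma bump_eq_of_mem {𝒰 : Set (Set X)} {U : Set X} {x : X} (hU : U ∈ 𝒰) (hx : x ∈ U)
    {r : ℝ} (hr : 0 ≤ r) : bump 𝒰 r x = r := by
  have hne : (⋃₀ 𝒰).Nonempty := ⟨x, U, hU, hx⟩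
  have hm : x ∈ ⋃₀ 𝒰 := ⟨U, hU, hx⟩
  rw [bump, if_pos hne, Metric.infDist_zero_of_mem hm]
  simpa using hr

lemma bump_pos {𝒰 : Set (Set X)} {r : ℝ} {x : X} (h : 0 < bump 𝒰 r x) :
    ∃ U ∈ 𝒰, x ∈ Metric.thickening r U := by
  rw [bump] at h
  split at h
  · rename_i hne
    have hlt : Metric.infDist x (⋃₀ 𝒰) < r := by
      rcases lt_max_iff.1 h with h' | h'
      · exact absurd h' (lt_irrefl 0)
      · linarith
    obtain ⟨y, hy, hyd⟩ := (Metric.infDist_lt_iff hne).1 hlt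
    obtain ⟨U, hU, hyU⟩ := hy
    exact ⟨U, hU, Metric.mem_thickening_iff.2 ⟨y, hyU, hyd⟩⟩
  · exact absurd h (lt_irrefl 0)


set_option linter.unusedSectionVars false

variable {Y : Type*} [MetricSpace Y]

lemma clamp1 (A B u v : ℝ) (hAB : A ≤ B) (hvu : v ≤ u) :
    max 0 (min B u - max A v) = max A (min B u) - max A (min B v) := by
  simp only [min_def, max_def]
  split_ifs <;> linarith

lemma clamp2 (A B E : ℝ) (hAB : A ≤ B) (hA : 0 ≤ A) (hE : 0 ≤ E) :
    max A (min B E) = min B E + A - min A E := by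
  simp only [min_def, max_def]
  split_ifs <;> linarith


/-- tail sums -/
def tailS (dd : ℕ → X → ℝ) (nn : ℕ) (i : ℕ) (x : X) : ℝ :=
  ∑ l ∈ Finset.Ico i nn, dd l x

lemma tailS_nonneg {dd : ℕ → X → ℝ} (h0 : ∀ l x, 0 ≤ dd l x) (nn i : ℕ) (x : X) :
    0 ≤ tailS dd nn i x :=
  Finset.sum_nonneg fun l _ => h0 l x

lemma tailS_anti {dd : ℕ → X → ℝ} (h0 : ∀ l x, 0 ≤ dd l x) (nn : ℕ) {i i' : ℕ}
    (h : i ≤ i') (x : X) : tailS dd nn i' x ≤ tailS dd nn i x :=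
  Finset.sum_le_sum_of_subset_of_nonneg (Finset.Ico_subset_Ico h le_rfl)
    (fun l _ _ => h0 l x)

lemma tailS_top (dd : ℕ → X → ℝ) (nn : ℕ) (x : X) : tailS dd nn nn x = 0 := by
  simp [tailS]

lemma tailS_succ (dd : ℕ → X → ℝ) {nn i : ℕ} (h : i < nn) (x : X) :
    tailS dd nn i x = dd i x + tailS dd nn (i+1) x := by
  rw [tailS, tailS, Finset.sum_eq_sum_Ico_succ_bot h]

lemma tailS_lip {dd : ℕ → X → ℝ} (hlip : ∀ l (x x' : X), dd l x ≤ dd l x' + dist x x')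
    (nn i : ℕ) (x x' : X) : tailS dd nn i x ≤ tailS dd nn i x' + nn * dist x x' := by
  have h1 : tailS dd nn i x ≤ ∑ l ∈ Finset.Ico i nn, (dd l x' + dist x x') :=
    Finset.sum_le_sum fun l _ => hlip l x x'
  rw [Finset.sum_add_distrib, Finset.sum_const, nsmul_eq_mul] at h1
  have h2 : ((Finset.Ico i nn).card : ℝ) * dist x x' ≤ nn * dist x x' := by
    apply mul_le_mul_of_nonneg_right _ dist_nonneg
    have : (Finset.Ico i nn).card ≤ nn := by
      rw [Nat.card_Ico]; omega
    exact_mod_cast this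
  calc tailS dd nn i x ≤ _ := h1
    _ ≤ _ := by rw [tailS]; linarith

lemma tailS_ge {dd : ℕ → X → ℝ} (h0 : ∀ l x, 0 ≤ dd l x) {nn i0 : ℕ} (hi : i0 < nn)
    {x : X} {r : ℝ} (hr : r ≤ dd i0 x) : r ≤ tailS dd nn 0 x := by
  refine le_trans hr (Finset.single_le_sum (fun l _ => h0 l x) ?_)
  simp [Finset.mem_Ico]; omega

/-- the interval-overlap coordinates on the product -/
def zed (dd : ℕ → X → ℝ) (ee : ℕ → Y → ℝ) (nn mm : ℕ) (i j : ℕ) (p : X × Y) : ℝ :=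
  max 0 (min (tailS dd nn i p.1) (tailS ee mm j p.2)
    - max (tailS dd nn (i+1) p.1) (tailS ee mm (j+1) p.2))

lemma zed_nonneg (dd : ℕ → X → ℝ) (ee : ℕ → Y → ℝ) (nn mm i j : ℕ) (p : X × Y) :
    0 ≤ zed dd ee nn mm i j p := le_max_left _ _

lemma zed_le_dd {dd : ℕ → X → ℝ} {ee : ℕ → Y → ℝ} {nn mm : ℕ}
    (h0 : ∀ l x, 0 ≤ dd l x) {i : ℕ} (hi : i < nn) (j : ℕ) (p : X × Y) :
    zed dd ee nn mm i j p ≤ dd i p.1 := by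
  apply max_le (h0 i p.1)
  have h1 : min (tailS dd nn i p.1) (tailS ee mm j p.2) ≤ tailS dd nn i p.1 := min_le_left _ _
  have h2 : tailS dd nn (i+1) p.1 ≤ max (tailS dd nn (i+1) p.1) (tailS ee mm (j+1) p.2) :=
    le_max_left _ _
  have h3 := tailS_succ dd hi p.1
  linarith

lemma zed_le_ee {dd : ℕ → X → ℝ} {ee : ℕ → Y → ℝ} {nn mm : ℕ}
    (h0 : ∀ l y, 0 ≤ ee l y) (i : ℕ) {j : ℕ} (hj : j < mm) (p : X × Y) :
    zed dd ee nn mm i j p ≤ ee j p.2 := by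
  apply max_le (h0 j p.2)
  have h1 : min (tailS dd nn i p.1) (tailS ee mm j p.2) ≤ tailS ee mm j p.2 := min_le_right _ _
  have h2 : tailS ee mm (j+1) p.2 ≤ max (tailS dd nn (i+1) p.1) (tailS ee mm (j+1) p.2) :=
    le_max_right _ _
  have h3 := tailS_succ ee hj p.2
  linarith

set_option linter.unusedSectionVars false

lemma zed_lip {dd : ℕ → X → ℝ} {ee : ℕ → Y → ℝ} {nn mm : ℕ}
    (hlipd : ∀ l (x x' : X), dd l x ≤ dd l x' + dist x x')
    (hlipe : ∀ l (y y' : Y), ee l y ≤ ee l y' + dist y y')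
    (i j : ℕ) (p q : X × Y) :
    zed dd ee nn mm i j p ≤ zed dd ee nn mm i j q + ((nn:ℝ) + mm) * 2 * dist p q := by
  have hdx : dist p.1 q.1 ≤ dist p q := by
    rw [Prod.dist_eq]; exact le_max_left _ _
  have hdy : dist p.2 q.2 ≤ dist p q := by
    rw [Prod.dist_eq]; exact le_max_right _ _
  have hdnn : (0:ℝ) ≤ dist p q := dist_nonneg
  set C : ℝ := ((nn:ℝ) + mm) * dist p q with hC
  have hC0 : 0 ≤ C := by positivity
  have hSpq : ∀ i' : ℕ, tailS dd nn i' p.1 ≤ tailS dd nn i' q.1 + C := by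
    intro i'
    have h := tailS_lip hlipd nn i' p.1 q.1
    have : (nn:ℝ) * dist p.1 q.1 ≤ C := by
      rw [hC]
      apply mul_le_mul _ hdx dist_nonneg (by positivity)
      push_cast; linarith
    linarith
  have hSqp : ∀ i' : ℕ, tailS dd nn i' q.1 ≤ tailS dd nn i' p.1 + C := by
    intro i'
    have h := tailS_lip hlipd nn i' q.1 p.1
    have : (nn:ℝ) * dist q.1 p.1 ≤ C := by
      rw [hC, dist_comm]
      apply mul_le_mul _ hdx dist_nonneg (by positivity)
      push_cast; linarith
    linarith
  have hTpq : ∀ j' : ℕ, tailS ee mm j' p.2 ≤ tailS ee mm j' q.2 + C := by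
    intro j'
    have h := tailS_lip hlipe mm j' p.2 q.2
    have : (mm:ℝ) * dist p.2 q.2 ≤ C := by
      rw [hC]
      apply mul_le_mul _ hdy dist_nonneg (by positivity)
      push_cast; linarith
    linarith
  have hTqp : ∀ j' : ℕ, tailS ee mm j' q.2 ≤ tailS ee mm j' p.2 + C := by
    intro j'
    have h := tailS_lip hlipe mm j' q.2 p.2
    have : (mm:ℝ) * dist q.2 p.2 ≤ C := by
      rw [hC, dist_comm]
      apply mul_le_mul _ hdy dist_nonneg (by positivity)
      push_cast; linarith
    linarith
  have hmin : min (tailS dd nn i p.1) (tailS ee mm j p.2)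
      ≤ min (tailS dd nn i q.1) (tailS ee mm j q.2) + C := by
    rcases le_total (tailS dd nn i q.1) (tailS ee mm j q.2) with h | h
    · have := hSpq i
      have h2 := min_le_left (tailS dd nn i p.1) (tailS ee mm j p.2)
      rw [min_eq_left h]; linarith
    · have := hTpq j
      have h2 := min_le_right (tailS dd nn i p.1) (tailS ee mm j p.2)
      rw [min_eq_right h]; linarith
  have hmax : max (tailS dd nn (i+1) q.1) (tailS ee mm (j+1) q.2)
      ≤ max (tailS dd nn (i+1) p.1) (tailS ee mm (j+1) p.2) + C := by
    apply max_le
    · have := hSqp (i+1)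
      have h2 := le_max_left (tailS dd nn (i+1) p.1) (tailS ee mm (j+1) p.2)
      linarith
    · have := hTqp (j+1)
      have h2 := le_max_right (tailS dd nn (i+1) p.1) (tailS ee mm (j+1) p.2)
      linarith
  rw [zed, zed]
  rcases le_total (min (tailS dd nn i p.1) (tailS ee mm j p.2)
      - max (tailS dd nn (i+1) p.1) (tailS ee mm (j+1) p.2)) 0 with h | h
  · rw [max_eq_left h]
    have := le_max_left (0:ℝ) (min (tailS dd nn i q.1) (tailS ee mm j q.2)
      - max (tailS dd nn (i+1) q.1) (tailS ee mm (j+1) q.2))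
    have : (0:ℝ) ≤ ((nn:ℝ) + mm) * 2 * dist p q := by positivity
    linarith [le_max_left (0:ℝ) (min (tailS dd nn i q.1) (tailS ee mm j q.2)
      - max (tailS dd nn (i+1) q.1) (tailS ee mm (j+1) q.2))]
  · rw [max_eq_right h]
    have htarget : min (tailS dd nn i p.1) (tailS ee mm j p.2)
        - max (tailS dd nn (i+1) p.1) (tailS ee mm (j+1) p.2)
        ≤ (min (tailS dd nn i q.1) (tailS ee mm j q.2)
          - max (tailS dd nn (i+1) q.1) (tailS ee mm (j+1) q.2)) + 2 * C := by
      linarith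
    have hmax0 := le_max_right (0:ℝ) (min (tailS dd nn i q.1) (tailS ee mm j q.2)
      - max (tailS dd nn (i+1) q.1) (tailS ee mm (j+1) q.2))
    have h2C : 2 * C = ((nn:ℝ) + mm) * 2 * dist p q := by rw [hC]; ring
    linarith

/-- chain property: positive overlaps are totally ordered -/
lemma zed_chain {dd : ℕ → X → ℝ} {ee : ℕ → Y → ℝ} {nn mm : ℕ}
    (h0d : ∀ l x, 0 ≤ dd l x) (h0e : ∀ l y, 0 ≤ ee l y)
    {i j i' j' : ℕ} (hii : i < i') (hjj : j' < j) {p : X × Y}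
    (hz1 : 0 < zed dd ee nn mm i j p) (hz2 : 0 < zed dd ee nn mm i' j' p) : False := by
  rw [zed] at hz1 hz2
  have w1 : 0 < min (tailS dd nn i p.1) (tailS ee mm j p.2)
      - max (tailS dd nn (i+1) p.1) (tailS ee mm (j+1) p.2) := by
    rcases lt_max_iff.1 hz1 with h | h
    · exact absurd h (lt_irrefl 0)
    · exact h
  have w2 : 0 < min (tailS dd nn i' p.1) (tailS ee mm j' p.2)
      - max (tailS dd nn (i'+1) p.1) (tailS ee mm (j'+1) p.2) := by
    rcases lt_max_iff.1 hz2 with h | h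
    · exact absurd h (lt_irrefl 0)
    · exact h
  -- from w1 : T j > S (i+1) ; from w2 : S i' > T (j'+1)
  have f1 : tailS dd nn (i+1) p.1 < tailS ee mm j p.2 := by
    have a := min_le_right (tailS dd nn i p.1) (tailS ee mm j p.2)
    have b := le_max_left (tailS dd nn (i+1) p.1) (tailS ee mm (j+1) p.2)
    linarith
  have f2 : tailS ee mm (j'+1) p.2 < tailS dd nn i' p.1 := by
    have a := min_le_left (tailS dd nn i' p.1) (tailS ee mm j' p.2)
    have b := le_max_right (tailS dd nn (i'+1) p.1) (tailS ee mm (j'+1) p.2)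
    linarith
  have g1 : tailS dd nn i' p.1 ≤ tailS dd nn (i+1) p.1 := tailS_anti h0d nn hii p.1
  have g2 : tailS ee mm j p.2 ≤ tailS ee mm (j'+1) p.2 := tailS_anti h0e mm hjj p.2
  linarith


lemma zed_row_sum {dd : ℕ → X → ℝ} {ee : ℕ → Y → ℝ} {nn mm : ℕ}
    (h0d : ∀ l x, 0 ≤ dd l x) (h0e : ∀ l y, 0 ≤ ee l y)
    {i : ℕ} (hi : i < nn) (p : X × Y) :
    ∑ j ∈ Finset.range mm, zed dd ee nn mm i j p
      = max (tailS dd nn (i+1) p.1) (min (tailS dd nn i p.1) (tailS ee mm 0 p.2))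
        - tailS dd nn (i+1) p.1 := by
  have hterm : ∀ j ∈ Finset.range mm, zed dd ee nn mm i j p
      = (fun j => max (tailS dd nn (i+1) p.1) (min (tailS dd nn i p.1) (tailS ee mm j p.2))) j
        - (fun j => max (tailS dd nn (i+1) p.1) (min (tailS dd nn i p.1) (tailS ee mm j p.2))) (j+1) := by
    intro j _
    have hAB : tailS dd nn (i+1) p.1 ≤ tailS dd nn i p.1 :=
      tailS_anti h0d nn (Nat.le_succ i) p.1
    have hvu : tailS ee mm (j+1) p.2 ≤ tailS ee mm j p.2 :=
      tailS_anti h0e mm (Nat.le_succ j) p.2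
    exact clamp1 _ _ _ _ hAB hvu
  rw [Finset.sum_congr rfl hterm, Finset.sum_range_sub']
  have hmm : tailS ee mm mm p.2 = 0 := tailS_top ee mm p.2
  have hS0 : 0 ≤ tailS dd nn i p.1 := tailS_nonneg h0d nn i p.1
  have hS1 : 0 ≤ tailS dd nn (i+1) p.1 := tailS_nonneg h0d nn (i+1) p.1
  rw [hmm, min_eq_right hS0, max_eq_left hS1]

lemma zed_sum_ge {dd : ℕ → X → ℝ} {ee : ℕ → Y → ℝ} {nn mm : ℕ} {r : ℝ}
    (h0d : ∀ l x, 0 ≤ dd l x) (h0e : ∀ l y, 0 ≤ ee l y) {p : X × Y}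
    (hcovd : ∃ i0 < nn, r ≤ dd i0 p.1) (hcove : ∃ j0 < mm, r ≤ ee j0 p.2) :
    r ≤ ∑ ij ∈ Finset.range nn ×ˢ Finset.range mm, zed dd ee nn mm ij.1 ij.2 p := by
  rw [Finset.sum_product]
  have hrow : ∀ i ∈ Finset.range nn, ∑ j ∈ Finset.range mm, zed dd ee nn mm i j p
      = (fun i => min (tailS dd nn i p.1) (tailS ee mm 0 p.2)) i
        - (fun i => min (tailS dd nn i p.1) (tailS ee mm 0 p.2)) (i+1) := by
    intro i hi
    rw [zed_row_sum h0d h0e (Finset.mem_range.1 hi) p]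
    have hAB : tailS dd nn (i+1) p.1 ≤ tailS dd nn i p.1 :=
      tailS_anti h0d nn (Nat.le_succ i) p.1
    have hA : 0 ≤ tailS dd nn (i+1) p.1 := tailS_nonneg h0d nn (i+1) p.1
    have hE : 0 ≤ tailS ee mm 0 p.2 := tailS_nonneg h0e mm 0 p.2
    have := clamp2 (tailS dd nn (i+1) p.1) (tailS dd nn i p.1) (tailS ee mm 0 p.2) hAB hA hE
    simp only []
    linarith
  rw [Finset.sum_congr rfl hrow, Finset.sum_range_sub']
  have hnn : tailS dd nn nn p.1 = 0 := tailS_top dd nn p.1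
  have hE : 0 ≤ tailS ee mm 0 p.2 := tailS_nonneg h0e mm 0 p.2
  rw [hnn]
  have hmin0 : min (0:ℝ) (tailS ee mm 0 p.2) = 0 := min_eq_left hE
  rw [hmin0]
  obtain ⟨i0, hi0, hd0⟩ := hcovd
  obtain ⟨j0, hj0, he0⟩ := hcove
  have h1 : r ≤ tailS dd nn 0 p.1 := tailS_ge h0d hi0 hd0
  have h2 : r ≤ tailS ee mm 0 p.2 := tailS_ge h0e hj0 he0
  have : r ≤ min (tailS dd nn 0 p.1) (tailS ee mm 0 p.2) := le_min h1 h2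
  linarith


/-! ### thresholds, counting, level selection -/

def delf (n m : ℕ) (r : ℝ) (l : ℕ) : ℝ :=
  r * ((2*(n:ℝ) + 2*m + 4) - l) / ((2*(n:ℝ) + 2*m + 4) * (((n:ℝ)+1) * ((m:ℝ)+1)))

lemma delf_denom_pos (n m : ℕ) : (0:ℝ) < (2*(n:ℝ) + 2*m + 4) * (((n:ℝ)+1) * ((m:ℝ)+1)) := by
  positivity

lemma delf_pos {n m : ℕ} {r : ℝ} (hr : 0 < r) {l : ℕ} (hl : (l:ℝ) < 2*(n:ℝ) + 2*m + 4) :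
    0 < delf n m r l := by
  rw [delf]
  apply div_pos _ (delf_denom_pos n m)
  apply mul_pos hr
  linarith

lemma delf_anti {n m : ℕ} {r : ℝ} (hr : 0 ≤ r) {l l' : ℕ} (h : l ≤ l') :
    delf n m r l' ≤ delf n m r l := by
  rw [delf, delf]
  have hc : (0:ℝ) ≤ (2*(n:ℝ) + 2*m + 4) * (((n:ℝ)+1) * ((m:ℝ)+1)) := (delf_denom_pos n m).le
  have hab : r * (2*(n:ℝ) + 2*m + 4 - l') ≤ r * (2*(n:ℝ) + 2*m + 4 - l) := by
    apply mul_le_mul_of_nonneg_left _ hr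
    have : (l:ℝ) ≤ l' := by exact_mod_cast h
    linarith
  exact div_le_div_of_nonneg_right hab hc

lemma delf_zero (n m : ℕ) (r : ℝ) : delf n m r 0 = r / (((n:ℝ)+1) * ((m:ℝ)+1)) := by
  rw [delf]
  have h1 : (2*(n:ℝ) + 2*m + 4) ≠ 0 := by positivity
  have h2 : (((n:ℝ)+1) * ((m:ℝ)+1)) ≠ 0 := by positivity
  field_simp
  ring

lemma delf_gap (n m : ℕ) (r : ℝ) (l : ℕ) :
    delf n m r l - delf n m r (l+1)
      = r / ((2*(n:ℝ) + 2*m + 4) * (((n:ℝ)+1) * ((m:ℝ)+1))) := by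
  rw [delf, delf]
  have h1 : (2*(n:ℝ) + 2*m + 4) * (((n:ℝ)+1) * ((m:ℝ)+1)) ≠ 0 := by positivity
  field_simp
  push_cast
  ring


/-- the grid of bi-indices -/
def gridNM (n m : ℕ) : Finset (ℕ × ℕ) := Finset.range (n+1) ×ˢ Finset.range (m+1)

lemma gridNM_card (n m : ℕ) : (gridNM n m).card = (n+1) * (m+1) := by
  rw [gridNM, Finset.card_product, Finset.card_range, Finset.card_range]

lemma gridNM_nonempty (n m : ℕ) : (gridNM n m).Nonempty :=
  ⟨(0,0), by simp [gridNM]⟩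

lemma mem_gridNM {n m : ℕ} {ij : ℕ × ℕ} :
    ij ∈ gridNM n m ↔ ij.1 < n + 1 ∧ ij.2 < m + 1 := by
  rw [gridNM, Finset.mem_product, Finset.mem_range, Finset.mem_range]

variable {X Y : Type*} [MetricSpace X] [MetricSpace Y]

/-- filtered set of large coordinates -/
def bigF (n m : ℕ) (r : ℝ) (dd : ℕ → X → ℝ) (ee : ℕ → Y → ℝ) (l : ℕ) (p : X × Y) :
    Finset (ℕ × ℕ) :=
  (gridNM n m).filter (fun ij => delf n m r l ≤ zed dd ee (n+1) (m+1) ij.1 ij.2 p)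

/-- count of large coordinates -/
def cnt (n m : ℕ) (r : ℝ) (dd : ℕ → X → ℝ) (ee : ℕ → Y → ℝ) (l : ℕ) (p : X × Y) : ℕ :=
  (bigF n m r dd ee l p).card

/-- selected level -/
def kf (n m : ℕ) (r : ℝ) (dd : ℕ → X → ℝ) (ee : ℕ → Y → ℝ) (p : X × Y) : ℕ :=
  Nat.findGreatest (fun l => min (l+1) (n+m+1) ≤ cnt n m r dd ee l p) (n+m+1)

/-- selected simplex -/
def sgf (n m : ℕ) (r : ℝ) (dd : ℕ → X → ℝ) (ee : ℕ → Y → ℝ) (p : X × Y) : Finset (ℕ × ℕ) :=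
  bigF n m r dd ee (kf n m r dd ee p) p

section CntLemmas

variable {n m : ℕ} {r : ℝ} {dd : ℕ → X → ℝ} {ee : ℕ → Y → ℝ}

lemma cnt_le_chain (h0d : ∀ l x, 0 ≤ dd l x) (h0e : ∀ l y, 0 ≤ ee l y)
    {δ : ℝ} (hδ : 0 < δ) (p : X × Y) :
    ((gridNM n m).filter (fun ij => δ ≤ zed dd ee (n+1) (m+1) ij.1 ij.2 p)).card ≤ n+m+1 := by
  have h : ((gridNM n m).filter
      (fun ij => δ ≤ zed dd ee (n+1) (m+1) ij.1 ij.2 p)).card ≤ (Finset.range (n+m+1)).card := by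
    apply Finset.card_le_card_of_injOn (fun ij => ij.1 + ij.2)
    · intro a ha
      obtain ⟨hg, _⟩ := Finset.mem_filter.1 ha
      obtain ⟨h1, h2⟩ := mem_gridNM.1 hg
      simp only [Finset.mem_coe, Finset.mem_range]; omega
    · intro a ha b hb heq
      simp only [Finset.coe_filter, Set.mem_setOf_eq] at ha hb
      obtain ⟨hga, hza⟩ := ha
      obtain ⟨hgb, hzb⟩ := hb
      have heq' : a.1 + a.2 = b.1 + b.2 := heq
      by_contra hne
      have hza' : 0 < zed dd ee (n+1) (m+1) a.1 a.2 p := lt_of_lt_of_le hδ hza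
      have hzb' : 0 < zed dd ee (n+1) (m+1) b.1 b.2 p := lt_of_lt_of_le hδ hzb
      rcases Nat.lt_trichotomy a.1 b.1 with hab | hab | hab
      · have : b.2 < a.2 := by omega
        exact zed_chain h0d h0e hab this hza' hzb'
      · apply hne
        have : a.2 = b.2 := by omega
        exact Prod.ext hab this
      · have : a.2 < b.2 := by omega
        exact zed_chain h0d h0e hab this hzb' hza'
  rwa [Finset.card_range] at h

lemma cnt_mono (hr : 0 ≤ r) {l l' : ℕ} (h : l ≤ l') (p : X × Y) :
    cnt n m r dd ee l p ≤ cnt n m r dd ee l' p := by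
  apply Finset.card_le_card
  intro ij hij
  rw [bigF, Finset.mem_filter] at hij
  rw [bigF, Finset.mem_filter]
  exact ⟨hij.1, le_trans (delf_anti hr h) hij.2⟩

lemma exists_big (hr : 0 < r) (h0d : ∀ l x, 0 ≤ dd l x) (h0e : ∀ l y, 0 ≤ ee l y)
    {p : X × Y} (hcovd : ∃ i0 < n+1, r ≤ dd i0 p.1) (hcove : ∃ j0 < m+1, r ≤ ee j0 p.2) :
    ∃ ij ∈ gridNM n m, delf n m r 0 ≤ zed dd ee (n+1) (m+1) ij.1 ij.2 p := by
  have hsum : r ≤ ∑ ij ∈ gridNM n m, zed dd ee (n+1) (m+1) ij.1 ij.2 p :=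
    zed_sum_ge h0d h0e hcovd hcove
  have hconst : ∑ _ij ∈ gridNM n m, delf n m r 0 ≤ ∑ ij ∈ gridNM n m, zed dd ee (n+1) (m+1) ij.1 ij.2 p := by
    rw [Finset.sum_const, gridNM_card, nsmul_eq_mul, delf_zero]
    have hP : (((n:ℝ)+1) * ((m:ℝ)+1)) ≠ 0 := by positivity
    have heq : ((((n+1) * (m+1) : ℕ)):ℝ) * (r / (((n:ℝ)+1) * ((m:ℝ)+1))) = r := by
      push_cast
      field_simp
    rw [heq]
    exact hsum
  exact Finset.exists_le_of_sum_le (gridNM_nonempty n m) hconst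

lemma kf_le (p : X × Y) : kf n m r dd ee p ≤ n+m+1 := Nat.findGreatest_le _

lemma kf_spec (hr : 0 < r) (h0d : ∀ l x, 0 ≤ dd l x) (h0e : ∀ l y, 0 ≤ ee l y)
    {p : X × Y} (hcovd : ∃ i0 < n+1, r ≤ dd i0 p.1) (hcove : ∃ j0 < m+1, r ≤ ee j0 p.2) :
    min (kf n m r dd ee p + 1) (n+m+1) ≤ cnt n m r dd ee (kf n m r dd ee p) p := by
  have h0 : min (0+1) (n+m+1) ≤ cnt n m r dd ee 0 p := by
    obtain ⟨ij, hg, hz⟩ := exists_big hr h0d h0e hcovd hcove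
    have hm : ij ∈ bigF n m r dd ee 0 p := Finset.mem_filter.2 ⟨hg, hz⟩
    have hcard : 1 ≤ cnt n m r dd ee 0 p := Finset.card_pos.2 ⟨ij, hm⟩
    omega
  rw [kf]
  exact Nat.findGreatest_spec (P := fun l => min (l+1) (n+m+1) ≤ cnt n m r dd ee l p)
    (Nat.zero_le _) h0

lemma kf_ne (hr : 0 < r) (h0d : ∀ l x, 0 ≤ dd l x) (h0e : ∀ l y, 0 ≤ ee l y)
    {p : X × Y} (hcovd : ∃ i0 < n+1, r ≤ dd i0 p.1) (hcove : ∃ j0 < m+1, r ≤ ee j0 p.2) :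
    kf n m r dd ee p ≠ n+m := by
  intro heq
  have hsp := kf_spec hr h0d h0e hcovd hcove
  rw [heq] at hsp
  have h1 : n+m+1 ≤ cnt n m r dd ee (n+m) p := by
    have hmin : min ((n+m)+1) (n+m+1) = n+m+1 := by omega
    rw [hmin] at hsp
    exact hsp
  have h2 : min ((n+m+1)+1) (n+m+1) ≤ cnt n m r dd ee (n+m+1) p := by
    have hmono := cnt_mono (n := n) (m := m) (dd := dd) (ee := ee) hr.le (Nat.le_succ (n+m)) p
    have hmin : min ((n+m+1)+1) (n+m+1) = n+m+1 := by omega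
    rw [hmin]
    exact le_trans h1 hmono
  have h3 : n+m+1 ≤ kf n m r dd ee p :=
    Nat.le_findGreatest (P := fun l => min (l+1) (n+m+1) ≤ cnt n m r dd ee l p) le_rfl h2
  omega

lemma sgf_nonempty (hr : 0 < r) (h0d : ∀ l x, 0 ≤ dd l x) (h0e : ∀ l y, 0 ≤ ee l y)
    {p : X × Y} (hcovd : ∃ i0 < n+1, r ≤ dd i0 p.1) (hcove : ∃ j0 < m+1, r ≤ ee j0 p.2) :
    (sgf n m r dd ee p).Nonempty := by
  obtain ⟨ij, hg, hz⟩ := exists_big hr h0d h0e hcovd hcove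
  refine ⟨ij, Finset.mem_filter.2 ⟨hg, le_trans (delf_anti hr.le (Nat.zero_le _)) hz⟩⟩

lemma sgf_outside (hr : 0 < r) (h0d : ∀ l x, 0 ≤ dd l x) (h0e : ∀ l y, 0 ≤ ee l y)
    {p : X × Y} (hcovd : ∃ i0 < n+1, r ≤ dd i0 p.1) (hcove : ∃ j0 < m+1, r ≤ ee j0 p.2)
    {ij : ℕ × ℕ} (hg : ij ∈ gridNM n m) (hout : ij ∉ sgf n m r dd ee p) :
    zed dd ee (n+1) (m+1) ij.1 ij.2 p < delf n m r (kf n m r dd ee p + 1) := by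
  by_contra hge
  push_neg at hge
  have hkle := kf_le (n := n) (m := m) (r := r) (dd := dd) (ee := ee) p
  have hsp := kf_spec hr h0d h0e hcovd hcove
  have hout' : ij ∉ bigF n m r dd ee (kf n m r dd ee p) p := hout
  set k := kf n m r dd ee p with hk
  clear_value k
  have hsub : bigF n m r dd ee k p ⊂ bigF n m r dd ee (k+1) p := by
    constructor
    · intro a ha
      rw [bigF, Finset.mem_filter] at ha
      rw [bigF, Finset.mem_filter]
      exact ⟨ha.1, le_trans (delf_anti hr.le (Nat.le_succ k)) ha.2⟩
    · intro hcon
      exact hout' (hcon (Finset.mem_filter.2 ⟨hg, hge⟩))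
  have hlt : cnt n m r dd ee k p < cnt n m r dd ee (k+1) p := Finset.card_lt_card hsub
  rcases Nat.lt_or_ge k (n+m+1) with hkN | hkN
  · have e1 : min (k+1) (n+m+1) = k+1 := min_eq_left (by omega)
    rw [e1] at hsp
    have hc2 : (k+1)+1 ≤ cnt n m r dd ee (k+1) p := by omega
    have hP : min ((k+1)+1) (n+m+1) ≤ cnt n m r dd ee (k+1) p :=
      le_trans (min_le_left ((k+1)+1) (n+m+1)) hc2
    have hkf_eq : Nat.findGreatest (fun l => min (l+1) (n+m+1) ≤ cnt n m r dd ee l p) (n+m+1) = k := by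
      rw [hk]; rfl
    have hgr := Nat.findGreatest_is_greatest
      (P := fun l => min (l+1) (n+m+1) ≤ cnt n m r dd ee l p)
      (k := k+1) (n := n+m+1) (by rw [hkf_eq]; omega) (by omega)
    exact hgr hP
  · have hkeq : k = n+m+1 := le_antisymm hkle hkN
    have hpos : (0:ℝ) < delf n m r (k+1) := by
      apply delf_pos hr
      rw [hkeq]
      push_cast
      linarith
    have hbound := cnt_le_chain (n := n) (m := m) h0d h0e hpos p
    have hb2 : cnt n m r dd ee (k+1) p ≤ n+m+1 := hbound
    have e1 : min (k+1) (n+m+1) = n+m+1 := min_eq_right (by omega)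
    rw [e1] at hsp
    omega

end CntLemmas

section SepLemmas

variable {X Y : Type*} [MetricSpace X] [MetricSpace Y]
variable {n m : ℕ} {r : ℝ} {dd : ℕ → X → ℝ} {ee : ℕ → Y → ℝ}

lemma sgf_sep_aux (hr : 0 < r) (h0d : ∀ l x, 0 ≤ dd l x) (h0e : ∀ l y, 0 ≤ ee l y)
    (hlipd : ∀ l (x x' : X), dd l x ≤ dd l x' + dist x x')
    (hlipe : ∀ l (y y' : Y), ee l y ≤ ee l y' + dist y y')
    {p q : X × Y}
    (hcovdq : ∃ i0 < n+1, r ≤ dd i0 q.1) (hcoveq : ∃ j0 < m+1, r ≤ ee j0 q.2)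
    (hk : kf n m r dd ee p = kf n m r dd ee q)
    {ij : ℕ × ℕ} (hp : ij ∈ sgf n m r dd ee p) (hq : ij ∉ sgf n m r dd ee q) :
    delf n m r (kf n m r dd ee p) - delf n m r (kf n m r dd ee p + 1)
      < (((n+1:ℕ):ℝ) + ((m+1:ℕ):ℝ)) * 2 * dist p q := by
  obtain ⟨hg, hzp⟩ := Finset.mem_filter.1 hp
  have hzq : zed dd ee (n+1) (m+1) ij.1 ij.2 q < delf n m r (kf n m r dd ee q + 1) :=
    sgf_outside hr h0d h0e hcovdq hcoveq hg hq
  rw [← hk] at hzq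
  have hlip := zed_lip (nn := n+1) (mm := m+1) hlipd hlipe ij.1 ij.2 p q
  linarith

lemma sgf_sep (hr : 0 < r) (h0d : ∀ l x, 0 ≤ dd l x) (h0e : ∀ l y, 0 ≤ ee l y)
    (hlipd : ∀ l (x x' : X), dd l x ≤ dd l x' + dist x x')
    (hlipe : ∀ l (y y' : Y), ee l y ≤ ee l y' + dist y y')
    {p q : X × Y}
    (hcovdp : ∃ i0 < n+1, r ≤ dd i0 p.1) (hcovep : ∃ j0 < m+1, r ≤ ee j0 p.2)
    (hcovdq : ∃ i0 < n+1, r ≤ dd i0 q.1) (hcoveq : ∃ j0 < m+1, r ≤ ee j0 q.2)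
    (hk : kf n m r dd ee p = kf n m r dd ee q)
    (hne : sgf n m r dd ee p ≠ sgf n m r dd ee q) :
    delf n m r (kf n m r dd ee p) - delf n m r (kf n m r dd ee p + 1)
      < (((n+1:ℕ):ℝ) + ((m+1:ℕ):ℝ)) * 2 * dist p q := by
  by_cases hsub : sgf n m r dd ee p ⊆ sgf n m r dd ee q
  · have hsub' : ¬ sgf n m r dd ee q ⊆ sgf n m r dd ee p := by
      intro hcon
      exact hne (Finset.Subset.antisymm hsub hcon)
    obtain ⟨ij, hij1, hij2⟩ := Finset.not_subset.1 hsub'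
    have := sgf_sep_aux hr h0d h0e hlipd hlipe hcovdp hcovep hk.symm hij1 hij2
    rw [← hk, dist_comm q p] at this
    exact this
  · obtain ⟨ij, hij1, hij2⟩ := Finset.not_subset.1 hsub
    exact sgf_sep_aux hr h0d h0e hlipd hlipe hcovdq hcoveq hk hij1 hij2

lemma kf_eq_of_min_eq (hr : 0 < r) (h0d : ∀ l x, 0 ≤ dd l x) (h0e : ∀ l y, 0 ≤ ee l y)
    {p q : X × Y}
    (hcovdp : ∃ i0 < n+1, r ≤ dd i0 p.1) (hcovep : ∃ j0 < m+1, r ≤ ee j0 p.2)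
    (hcovdq : ∃ i0 < n+1, r ≤ dd i0 q.1) (hcoveq : ∃ j0 < m+1, r ≤ ee j0 q.2)
    (h : min (kf n m r dd ee p) (n+m) = min (kf n m r dd ee q) (n+m)) :
    kf n m r dd ee p = kf n m r dd ee q := by
  have h1 := kf_le (n := n) (m := m) (r := r) (dd := dd) (ee := ee) p
  have h2 := kf_le (n := n) (m := m) (r := r) (dd := dd) (ee := ee) q
  have h3 := kf_ne hr h0d h0e hcovdp hcovep
  have h4 := kf_ne hr h0d h0e hcovdq hcoveq
  omega

end SepLemmas

end AsdimProdAux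

section MainLemma

lemma const_mul_mem {S : Set (ℝ≥0 → ℝ≥0)} (hS : IsControlSemigroup S) {c : ℝ≥0} (hc : 1 ≤ c) :
    (fun x : ℝ≥0 => c * x) ∈ S := by
  apply hS.2.1
  · refine ⟨continuous_const.mul continuous_id, fun a b hab => mul_le_mul_of_nonneg_left hab zero_le, ?_, ?_⟩
    · exact Filter.Eventually.of_forall fun x => le_mul_of_one_le_left zero_le hc
    · exact tendsto_atTop_mono (fun x => le_mul_of_one_le_left zero_le hc) tendsto_id
  · exact ⟨c, 0, Filter.Eventually.of_forall fun x => (add_zero _).symm⟩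

lemma ASDimLE_prod {S : Set (ℝ≥0 → ℝ≥0)} (hS : IsControlSemigroup S)
    {X Y : Type*} [MetricSpace X] [MetricSpace Y] {n m : ℕ}
    (hX : ASDimLE S X n) (hY : ASDimLE S Y m) : ASDimLE S (X × Y) (n + m) := by
  classical
  obtain ⟨fX, hfXS, s0X, hcovX⟩ := hX
  obtain ⟨fY, hfYS, s0Y, hcovY⟩ := hY
  have hlsX := hS.1 fX hfXS
  have hlsY := hS.1 fY hfYS
  obtain ⟨aX, haX⟩ := eventually_atTop.1 hlsX.2.2.1
  obtain ⟨aY, haY⟩ := eventually_atTop.1 hlsY.2.2.1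
  set Λn : ℕ := 4*((n+1)*(m+1))*((2*(n+m)+4)*(2*(n+m)+4)) with hΛn
  have hΛpos : 0 < Λn := by positivity
  have hΛ1 : (1:ℝ≥0) ≤ (Λn : ℝ≥0) := by exact_mod_cast hΛpos
  have hΛ4 : (4:ℝ) ≤ ((Λn : ℕ) : ℝ) := by
    have h1 : 1 ≤ (n+1)*(m+1) := Nat.one_le_iff_ne_zero.2 (by positivity)
    have h2 : 1 ≤ (2*(n+m)+4)*(2*(n+m)+4) := Nat.one_le_iff_ne_zero.2 (by positivity)
    have h3 : 4*1*1 ≤ Λn := by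
      rw [hΛn]
      exact Nat.mul_le_mul (Nat.mul_le_mul (le_refl 4) h1) h2
    have : 4 ≤ Λn := by omega
    exact_mod_cast this
  refine ⟨fun u => 2 * fX (fY ((Λn : ℝ≥0) * u)), ?_, max (max s0X s0Y) (max 1 (max aX aY)), ?_⟩
  · have h2 : (fun u : ℝ≥0 => 2 * u) ∈ S := const_mul_mem hS (by norm_num)
    have hΛm : (fun u : ℝ≥0 => (Λn:ℝ≥0) * u) ∈ S := const_mul_mem hS hΛ1
    have h3 := hS.2.2 _ (hS.2.2 _ h2 _ hfXS) _ (hS.2.2 _ hfYS _ hΛm)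
    exact h3
  · intro t ht
    -- basic scale facts
    have ht1 : (1:ℝ≥0) ≤ t :=
      le_trans (le_trans (le_max_left 1 (max aX aY)) (le_max_right (max s0X s0Y) _)) ht
    have htaX : aX ≤ t :=
      le_trans (le_trans (le_trans (le_max_left aX aY) (le_max_right 1 _))
        (le_max_right (max s0X s0Y) _)) ht
    have htaY : aY ≤ t :=
      le_trans (le_trans (le_trans (le_max_right aX aY) (le_max_right 1 _))
        (le_max_right (max s0X s0Y) _)) ht
    set s : ℝ≥0 := (Λn : ℝ≥0) * t with hs
    have hts : t ≤ s := le_mul_of_one_le_left zero_le hΛ1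
    have hs0X : s0X ≤ s :=
      le_trans (le_trans (le_trans (le_max_left s0X s0Y) (le_max_left _ _)) ht) hts
    have hs0Y : s0Y ≤ s :=
      le_trans (le_trans (le_trans (le_max_right s0X s0Y) (le_max_left _ _)) ht) hts
    obtain ⟨𝒰, hcovU, hUprop⟩ := hcovX s hs0X
    obtain ⟨𝒱, hcovV, hVprop⟩ := hcovY s hs0Y
    set r : ℝ := (s:ℝ)/4 with hrdef
    have h1t : (1:ℝ) ≤ (t:ℝ) := by exact_mod_cast ht1
    have htpos : (0:ℝ) < (t:ℝ) := lt_of_lt_of_le zero_lt_one h1t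
    have h1s : (1:ℝ) ≤ (s:ℝ) := by
      have : (1:ℝ≥0) ≤ s := le_trans ht1 hts
      exact_mod_cast this
    have hsR : (s:ℝ) = ((Λn:ℕ):ℝ) * (t:ℝ) := by rw [hs]; push_cast; ring
    have hr0 : 0 < r := by rw [hrdef]; linarith
    set 𝒰' : ℕ → Set (Set X) := fun i => if h : i < n+1 then 𝒰 ⟨i, h⟩ else ∅ with h𝒰'
    set 𝒱' : ℕ → Set (Set Y) := fun j => if h : j < m+1 then 𝒱 ⟨j, h⟩ else ∅ with h𝒱'
    set dd : ℕ → X → ℝ := fun i x => bump (𝒰' i) r x with hdd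
    set ee : ℕ → Y → ℝ := fun j y => bump (𝒱' j) r y with hee
    have h0d : ∀ l x, 0 ≤ dd l x := fun l x => bump_nonneg _ _ _
    have h0e : ∀ l y, 0 ≤ ee l y := fun l y => bump_nonneg _ _ _
    have hlipd : ∀ l (x x' : X), dd l x ≤ dd l x' + dist x x' := fun l x x' => bump_lip _ _ _ _
    have hlipe : ∀ l (y y' : Y), ee l y ≤ ee l y' + dist y y' := fun l y y' => bump_lip _ _ _ _
    have hcovd : ∀ x : X, ∃ i < n+1, r ≤ dd i x := by
      intro x
      have hx : x ∈ ⋃ i, ⋃₀ 𝒰 i := by rw [hcovU]; exact mem_univ x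
      rw [mem_iUnion] at hx
      obtain ⟨i, hxi⟩ := hx
      obtain ⟨U, hUi, hxU⟩ := hxi
      refine ⟨i.1, i.isLt, ?_⟩
      have h𝒰eq : 𝒰' i.1 = 𝒰 i := by rw [h𝒰']; simp [i.isLt]
      have : dd i.1 x = r := by
        rw [hdd]
        simp only []
        rw [h𝒰eq]
        exact bump_eq_of_mem hUi hxU hr0.le
      exact le_of_eq this.symm
    have hcove : ∀ y : Y, ∃ j < m+1, r ≤ ee j y := by
      intro y
      have hy : y ∈ ⋃ j, ⋃₀ 𝒱 j := by rw [hcovV]; exact mem_univ y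
      rw [mem_iUnion] at hy
      obtain ⟨j, hyj⟩ := hy
      obtain ⟨V, hVj, hyV⟩ := hyj
      refine ⟨j.1, j.isLt, ?_⟩
      have h𝒱eq : 𝒱' j.1 = 𝒱 j := by rw [h𝒱']; simp [j.isLt]
      have : ee j.1 y = r := by
        rw [hee]
        simp only []
        rw [h𝒱eq]
        exact bump_eq_of_mem hVj hyV hr0.le
      exact le_of_eq this.symm
    -- the families
    refine ⟨fun c => {W | ∃ F : Finset (ℕ × ℕ), ∃ U : Set X, ∃ V : Set Y,
        U ∈ 𝒰' (pickPair F).1 ∧ V ∈ 𝒱' (pickPair F).2 ∧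
        W = {p : X × Y | min (kf n m r dd ee p) (n+m) = c.1 ∧ sgf n m r dd ee p = F ∧
          p.1 ∈ Metric.thickening r U ∧ p.2 ∈ Metric.thickening r V}}, ?_, ?_⟩
    · -- covering
      rw [Set.eq_univ_iff_forall]
      intro p
      have hsgne : (sgf n m r dd ee p).Nonempty :=
        sgf_nonempty hr0 h0d h0e (hcovd p.1) (hcove p.2)
      have hijF := pickPair_mem hsgne
      rw [sgf, bigF, Finset.mem_filter] at hijF
      obtain ⟨hg, hzF⟩ := hijF
      have hgrid := mem_gridNM.1 hg
      have hklep := kf_le (n := n) (m := m) (r := r) (dd := dd) (ee := ee) p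
      have hδpos : 0 < delf n m r (kf n m r dd ee p) := by
        apply delf_pos hr0
        have : ((kf n m r dd ee p : ℕ):ℝ) ≤ ((n+m+1 : ℕ):ℝ) := by exact_mod_cast hklep
        push_cast at this ⊢
        linarith
      have hzpos : 0 < zed dd ee (n+1) (m+1) (pickPair (sgf n m r dd ee p)).1
          (pickPair (sgf n m r dd ee p)).2 p := lt_of_lt_of_le hδpos hzF
      have hddpos : 0 < dd (pickPair (sgf n m r dd ee p)).1 p.1 :=
        lt_of_lt_of_le hzpos (zed_le_dd h0d hgrid.1 _ p)
      have heepos : 0 < ee (pickPair (sgf n m r dd ee p)).2 p.2 :=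
        lt_of_lt_of_le hzpos (zed_le_ee h0e _ hgrid.2 p)
      obtain ⟨U, hUF, hpU⟩ := bump_pos (by rw [hdd] at hddpos; exact hddpos)
      obtain ⟨V, hVF, hpV⟩ := bump_pos (by rw [hee] at heepos; exact heepos)
      rw [mem_iUnion]
      refine ⟨⟨min (kf n m r dd ee p) (n+m), by omega⟩, ?_⟩
      rw [mem_sUnion]
      refine ⟨_, ⟨sgf n m r dd ee p, U, V, hUF, hVF, rfl⟩, ?_⟩
      exact ⟨rfl, rfl, hpU, hpV⟩
    · -- disjoint and bounded
      intro c
      constructor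
      · -- SDisjoint
        rintro W1 ⟨F1, U1, V1, hU1, hV1, rfl⟩ W2 ⟨F2, U2, V2, hU2, hV2, rfl⟩ hne12 p hp q hq
        obtain ⟨hc1, hs1, hx1, hy1⟩ := hp
        obtain ⟨hc2, hs2, hx2, hy2⟩ := hq
        have hkpq : kf n m r dd ee p = kf n m r dd ee q := by
          apply kf_eq_of_min_eq hr0 h0d h0e (hcovd p.1) (hcove p.2) (hcovd q.1) (hcove q.2)
          rw [hc1, hc2]
        by_cases hF : F1 = F2
        · -- same simplex: use the covers' disjointness
          have hUV : ¬ (U1 = U2 ∧ V1 = V2) := by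
            rintro ⟨rfl, rfl⟩
            exact hne12 (by rw [hF])
          have hdxle : dist p.1 q.1 ≤ dist p q := by
            rw [Prod.dist_eq]; exact le_max_left _ _
          have hdyle : dist p.2 q.2 ≤ dist p q := by
            rw [Prod.dist_eq]; exact le_max_right _ _
          have hhalf : (t:ℝ) < (s:ℝ)/2 - 2*r + r + r := by
            -- t < s/2 ; keep a clean form: s/2 ≥ 2 t > t
            rw [hsR]
            nlinarith
          by_cases hUeq : U1 = U2
          · have hVne : V1 ≠ V2 := fun hVeq => hUV ⟨hUeq, hVeq⟩
            have hj₀ : (pickPair F1).2 < m+1 := by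
              by_contra hcon
              rw [h𝒱'] at hV1
              simp only [dif_neg hcon] at hV1
              exact absurd hV1 (Set.notMem_empty V1)
            have hV1' : V1 ∈ 𝒱 ⟨(pickPair F1).2, hj₀⟩ := by
              rw [h𝒱'] at hV1
              simpa [dif_pos hj₀, Nat.le_of_lt_succ hj₀] using hV1
            have hV2' : V2 ∈ 𝒱 ⟨(pickPair F1).2, hj₀⟩ := by
              rw [← hF, h𝒱'] at hV2
              simpa [dif_pos hj₀, Nat.le_of_lt_succ hj₀] using hV2
            obtain ⟨v1, hv1, hd1⟩ := Metric.mem_thickening_iff.1 hy1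
            obtain ⟨v2, hv2, hd2⟩ := Metric.mem_thickening_iff.1 hy2
            have hss : (s:ℝ) < dist v1 v2 :=
              (hVprop ⟨(pickPair F1).2, hj₀⟩).1 V1 hV1' V2 hV2' hVne v1 hv1 v2 hv2
            have htri : dist v1 v2 ≤ dist v1 p.2 + dist p.2 q.2 + dist q.2 v2 := dist_triangle4 _ _ _ _
            rw [dist_comm v1 p.2] at htri
            have h2r : (s:ℝ)/2 = (s:ℝ) - 2*r := by rw [hrdef]; ring
            nlinarith [hdyle]
          · have hi₀ : (pickPair F1).1 < n+1 := by
              by_contra hcon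
              rw [h𝒰'] at hU1
              simp only [dif_neg hcon] at hU1
              exact absurd hU1 (Set.notMem_empty U1)
            have hU1' : U1 ∈ 𝒰 ⟨(pickPair F1).1, hi₀⟩ := by
              rw [h𝒰'] at hU1
              simpa [dif_pos hi₀, Nat.le_of_lt_succ hi₀] using hU1
            have hU2' : U2 ∈ 𝒰 ⟨(pickPair F1).1, hi₀⟩ := by
              rw [← hF, h𝒰'] at hU2
              simpa [dif_pos hi₀, Nat.le_of_lt_succ hi₀] using hU2
            obtain ⟨u1, hu1, hd1⟩ := Metric.mem_thickening_iff.1 hx1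
            obtain ⟨u2, hu2, hd2⟩ := Metric.mem_thickening_iff.1 hx2
            have hss : (s:ℝ) < dist u1 u2 :=
              (hUprop ⟨(pickPair F1).1, hi₀⟩).1 U1 hU1' U2 hU2' hUeq u1 hu1 u2 hu2
            have htri : dist u1 u2 ≤ dist u1 p.1 + dist p.1 q.1 + dist q.1 u2 := dist_triangle4 _ _ _ _
            rw [dist_comm u1 p.1] at htri
            nlinarith [hdxle]
        · -- different simplices: Lipschitz separation
          have hsne : sgf n m r dd ee p ≠ sgf n m r dd ee q := by
            rw [hs1, hs2]; exact hF
          have hsep := sgf_sep hr0 h0d h0e hlipd hlipe (hcovd p.1) (hcove p.2)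
            (hcovd q.1) (hcove q.2) hkpq hsne
          rw [delf_gap] at hsep
          have hD : (0:ℝ) < 2*(n:ℝ)+2*(m:ℝ)+4 := by positivity
          have hgap : r / ((2*(n:ℝ)+2*(m:ℝ)+4) * (((n:ℝ)+1)*((m:ℝ)+1)))
              = (2*(n:ℝ)+2*(m:ℝ)+4) * (t:ℝ) := by
            rw [hrdef, hsR, hΛn]
            push_cast
            field_simp
          have hC : (((n+1:ℕ):ℝ) + ((m+1:ℕ):ℝ)) * 2 = 2*(n:ℝ)+2*(m:ℝ)+4 := by
            push_cast; ring
          rw [hgap, hC] at hsep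
          -- (D) * t < (D) * dist
          have := lt_of_mul_lt_mul_left hsep hD.le
          exact this
      · -- BoundedBy
        rintro W ⟨F, U, V, hUF, hVF, rfl⟩
        apply EMetric.diam_le
        intro p hp q hq
        obtain ⟨_, _, hx1, hy1⟩ := hp
        obtain ⟨_, _, hx2, hy2⟩ := hq
        -- NNReal comparisons
        have hsfY : s ≤ fY s := haY s (le_trans htaY hts)
        have hfXmono : fX s ≤ fX (fY s) := hlsX.2.1 hsfY
        have hfYfX : fY s ≤ fX (fY s) := haX (fY s) (le_trans (le_trans htaX hts) hsfY)
        have hsfXfY : s ≤ fX (fY s) := le_trans hsfY hfYfX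
        have hbX : ((fX s : ℝ≥0) : ℝ) + (s:ℝ)/2 ≤ ((2 * fX (fY s) : ℝ≥0) : ℝ) := by
          have c1 : ((fX s : ℝ≥0) : ℝ) ≤ ((fX (fY s) : ℝ≥0) : ℝ) := by exact_mod_cast hfXmono
          have c2 : (s : ℝ) ≤ ((fX (fY s) : ℝ≥0) : ℝ) := by exact_mod_cast hsfXfY
          push_cast
          linarith
        have hbY : ((fY s : ℝ≥0) : ℝ) + (s:ℝ)/2 ≤ ((2 * fX (fY s) : ℝ≥0) : ℝ) := by
          have c1 : ((fY s : ℝ≥0) : ℝ) ≤ ((fX (fY s) : ℝ≥0) : ℝ) := by exact_mod_cast hfYfX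
          have c2 : (s : ℝ) ≤ ((fX (fY s) : ℝ≥0) : ℝ) := by exact_mod_cast hsfXfY
          push_cast
          linarith
        rw [Prod.edist_eq]
        apply max_le
        · -- X coordinate
          have hi₀ : (pickPair F).1 < n+1 := by
            by_contra hcon
            rw [h𝒰'] at hUF
            simp only [dif_neg hcon] at hUF
            exact absurd hUF (Set.notMem_empty U)
          have hUm : U ∈ 𝒰 ⟨(pickPair F).1, hi₀⟩ := by
            rw [h𝒰'] at hUF
            simpa [dif_pos hi₀, Nat.le_of_lt_succ hi₀] using hUF
          have hUb : EMetric.diam U ≤ ((fX s : ℝ≥0) : ℝ≥0∞) :=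
            (hUprop ⟨(pickPair F).1, hi₀⟩).2 U hUm
          obtain ⟨u1, hu1, hd1⟩ := Metric.mem_thickening_iff.1 hx1
          obtain ⟨u2, hu2, hd2⟩ := Metric.mem_thickening_iff.1 hx2
          have hed : edist u1 u2 ≤ ((fX s : ℝ≥0) : ℝ≥0∞) :=
            le_trans (EMetric.edist_le_diam_of_mem hu1 hu2) hUb
          have hd12 : dist u1 u2 ≤ ((fX s : ℝ≥0) : ℝ) := dist_le_coe.2 (edist_le_coe.1 hed)
          have htri : dist p.1 q.1 ≤ dist p.1 u1 + dist u1 u2 + dist u2 q.1 :=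
            dist_triangle4 _ _ _ _
          rw [dist_comm u2 q.1] at htri
          have hdist : dist p.1 q.1 ≤ ((2 * fX (fY s) : ℝ≥0) : ℝ) := by
            have : dist p.1 q.1 ≤ ((fX s : ℝ≥0) : ℝ) + (s:ℝ)/2 := by
              rw [hrdef] at hd1 hd2
              linarith
            linarith [hbX]
          calc edist p.1 q.1 = ENNReal.ofReal (dist p.1 q.1) := edist_dist _ _
            _ ≤ ENNReal.ofReal ((2 * fX (fY s) : ℝ≥0) : ℝ) := ENNReal.ofReal_le_ofReal hdist
            _ = ((2 * fX (fY s) : ℝ≥0) : ℝ≥0∞) := ENNReal.ofReal_coe_nnreal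
        · -- Y coordinate
          have hj₀ : (pickPair F).2 < m+1 := by
            by_contra hcon
            rw [h𝒱'] at hVF
            simp only [dif_neg hcon] at hVF
            exact absurd hVF (Set.notMem_empty V)
          have hVm : V ∈ 𝒱 ⟨(pickPair F).2, hj₀⟩ := by
            rw [h𝒱'] at hVF
            simpa [dif_pos hj₀, Nat.le_of_lt_succ hj₀] using hVF
          have hVb : EMetric.diam V ≤ ((fY s : ℝ≥0) : ℝ≥0∞) :=
            (hVprop ⟨(pickPair F).2, hj₀⟩).2 V hVm
          obtain ⟨v1, hv1, hd1⟩ := Metric.mem_thickening_iff.1 hy1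
          obtain ⟨v2, hv2, hd2⟩ := Metric.mem_thickening_iff.1 hy2
          have hed : edist v1 v2 ≤ ((fY s : ℝ≥0) : ℝ≥0∞) :=
            le_trans (EMetric.edist_le_diam_of_mem hv1 hv2) hVb
          have hd12 : dist v1 v2 ≤ ((fY s : ℝ≥0) : ℝ) := dist_le_coe.2 (edist_le_coe.1 hed)
          have htri : dist p.2 q.2 ≤ dist p.2 v1 + dist v1 v2 + dist v2 q.2 :=
            dist_triangle4 _ _ _ _
          rw [dist_comm v2 q.2] at htri
          have hdist : dist p.2 q.2 ≤ ((2 * fX (fY s) : ℝ≥0) : ℝ) := by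
            have : dist p.2 q.2 ≤ ((fY s : ℝ≥0) : ℝ) + (s:ℝ)/2 := by
              rw [hrdef] at hd1 hd2
              linarith
            linarith [hbY]
          calc edist p.2 q.2 = ENNReal.ofReal (dist p.2 q.2) := edist_dist _ _
            _ ≤ ENNReal.ofReal ((2 * fX (fY s) : ℝ≥0) : ℝ) := ENNReal.ofReal_le_ofReal hdist
            _ = ((2 * fX (fY s) : ℝ≥0) : ℝ≥0∞) := ENNReal.ofReal_coe_nnreal

end MainLemma

/-- The product `X × Y` carries the max metric (Mathlib's product metric):
`dist (x,y) (x',y') = max (dist x x') (dist y y')`. -/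
theorem asdim_prod_le (S : Set (ℝ≥0 → ℝ≥0)) (hS : IsControlSemigroup S)
    (X Y : Type*) [MetricSpace X] [MetricSpace Y] :
    ASDim S (X × Y) ≤ ASDim S X + ASDim S Y := by
  classical
  by_cases hx : ∃ k : ℕ, ASDimLE S X k
  · by_cases hy : ∃ k : ℕ, ASDimLE S Y k
    · have hXdim : ASDim S X = ((Nat.find hx : ℕ) : ℕ∞) := by
        apply le_antisymm
        · exact sInf_le ⟨Nat.find hx, rfl, Nat.find_spec hx⟩
        · apply le_sInf
          rintro b ⟨k, rfl, hk⟩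
          exact_mod_cast Nat.find_min' hx hk
      have hYdim : ASDim S Y = ((Nat.find hy : ℕ) : ℕ∞) := by
        apply le_antisymm
        · exact sInf_le ⟨Nat.find hy, rfl, Nat.find_spec hy⟩
        · apply le_sInf
          rintro b ⟨k, rfl, hk⟩
          exact_mod_cast Nat.find_min' hy hk
      have key := ASDimLE_prod hS (Nat.find_spec hx) (Nat.find_spec hy)
      calc ASDim S (X × Y) ≤ ((Nat.find hx + Nat.find hy : ℕ) : ℕ∞) :=
            sInf_le ⟨Nat.find hx + Nat.find hy, rfl, key⟩
        _ = ((Nat.find hx : ℕ) : ℕ∞) + ((Nat.find hy : ℕ) : ℕ∞) := by push_cast; rfl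
        _ = ASDim S X + ASDim S Y := by rw [hXdim, hYdim]
    · have hYdim : ASDim S Y = ⊤ := by
        rw [ASDim]
        convert sInf_empty
        · exact rfl
        rw [Set.eq_empty_iff_forall_notMem]
        rintro k ⟨nn, rfl, hnn⟩
        exact hy ⟨nn, hnn⟩
      rw [hYdim, add_top]
      exact le_top
  · have hXdim : ASDim S X = ⊤ := by
      rw [ASDim]
      convert sInf_empty
      · exact rfl
      rw [Set.eq_empty_iff_forall_notMem]
      rintro k ⟨nn, rfl, hnn⟩
      exact hx ⟨nn, hnn⟩
    rw [hXdim, top_add]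
    exact le_top
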